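/- Let p be a positive integer, and define the polynomials G_n(p) ∈ ℝ[t] by G_0(p) = 1 and G_n(p) = (p/n) Σ_{k=1}^{n} (−1)^{k+1} B_k · G_{n−k}(p) for n ≥ 1, where B_k ∈ ℝ[t] is the k-th Bernoulli polynomial. Then for every n ≥ p+1, the polynomial G_n(p) has degree at most n − p − 1 in t; in particular, G_{p+1}(p) is a constant polynomial. -/

import Mathlib

open Finset Polynomial

/-- The `k`-th Bernoulli polynomial as a real polynomial
(generating function `u e^{tu}/(e^u - 1)`, so `bernR 1 = X - 1/2`). -/
noncomputable def bernR (k : ℕ) : Polynomial ℝ :=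
  (Polynomial.bernoulli k).map (algebraMap ℚ ℝ)

lemma bernR_zero : bernR 0 = 1 := by
  simp [bernR]

lemma derivative_bernR (k : ℕ) :
    derivative (bernR (k + 1)) = C ((k : ℝ) + 1) * bernR k := by
  have h := Polynomial.derivative_bernoulli_add_one k
  have : derivative (bernR (k + 1)) =
      ((Polynomial.derivative (Polynomial.bernoulli (k + 1))).map (algebraMap ℚ ℝ)) := by
    simp [bernR, derivative_map]
  rw [this, h, Polynomial.map_mul, bernR]
  congr 1
  simp

lemma icc_sum_eq_range (f : ℕ → Polynomial ℝ) (n : ℕ) :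
    ∑ k ∈ Icc 1 n, f k = ∑ i ∈ range n, f (i + 1) := by
  rw [← Finset.Ico_add_one_right_eq_Icc, Finset.sum_Ico_eq_sum_range]
  simp [add_comm]

/-- Key derivative identity: `(G n)' = (p - n + 1) • G (n-1)`. -/
lemma G_derivative (p : ℝ) (G : ℕ → Polynomial ℝ) (hG0 : G 0 = 1)
    (hG : ∀ n : ℕ, 1 ≤ n → C (n : ℝ) * G n =
      C p * ∑ k ∈ Icc 1 n, (-1 : Polynomial ℝ) ^ (k + 1) * bernR k * G (n - k)) :
    ∀ n : ℕ, 1 ≤ n → derivative (G n) = C (p - n + 1) * G (n - 1) := by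
  intro n
  induction n using Nat.strong_induction_on with
  | _ n ih =>
    intro hn
    obtain ⟨m, rfl⟩ := Nat.exists_eq_add_of_le hn
    rw [add_comm] at *
    -- n = m + 1
    have hrec := hG (m + 1) (by omega)
    have hcm : (C ((m + 1 : ℕ) : ℝ) : Polynomial ℝ) ≠ 0 := by
      simp only [ne_eq, C_eq_zero]
      positivity
    apply mul_left_cancel₀ hcm
    have hL : C (((m + 1 : ℕ) : ℝ)) * derivative (G (m + 1)) =
        C p * derivative (∑ k ∈ Icc 1 (m + 1),
          (-1 : Polynomial ℝ) ^ (k + 1) * bernR k * G (m + 1 - k)) := by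
      rw [← derivative_C_mul, hrec, derivative_C_mul]
    rw [hL]
    -- expand derivative of the sum
    have h1 : derivative (∑ k ∈ Icc 1 (m + 1),
          (-1 : Polynomial ℝ) ^ (k + 1) * bernR k * G (m + 1 - k)) =
        (∑ k ∈ Icc 1 (m + 1),
          (-1 : Polynomial ℝ) ^ (k + 1) * (derivative (bernR k) * G (m + 1 - k))) +
        ∑ k ∈ Icc 1 (m + 1),
          (-1 : Polynomial ℝ) ^ (k + 1) * (bernR k * derivative (G (m + 1 - k))) := by
      rw [derivative_sum, ← sum_add_distrib]
      refine sum_congr rfl fun k _ => ?_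
      rw [derivative_mul, derivative_mul]
      have hz : derivative ((-1 : Polynomial ℝ) ^ (k + 1)) = 0 := by
        simp [derivative_pow]
      rw [hz]
      ring
    rw [h1]
    -- A sum
    have hA : (∑ k ∈ Icc 1 (m + 1),
          (-1 : Polynomial ℝ) ^ (k + 1) * (derivative (bernR k) * G (m + 1 - k))) =
        G m + ∑ i ∈ range m,
          (-1 : Polynomial ℝ) ^ (i + 1) * (C ((i : ℝ) + 2) * bernR (i + 1) * G (m - (i + 1))) := by
      rw [icc_sum_eq_range]
      rw [Finset.sum_range_succ']
      have h0 : (-1 : Polynomial ℝ) ^ (0 + 1 + 1) * (derivative (bernR (0 + 1)) * G (m + 1 - (0 + 1))) = G m := by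
        simp [derivative_bernR 0, bernR_zero]
      rw [h0, add_comm]
      congr 1
      refine sum_congr rfl fun i _ => ?_
      have : m + 1 - (i + 1 + 1) = m - (i + 1) := by omega
      rw [this, derivative_bernR (i + 1)]
      have hpow : (-1 : Polynomial ℝ) ^ (i + 1 + 1 + 1) = (-1) ^ (i + 1) := by
        rw [pow_succ, pow_succ]
        ring
      rw [hpow]
      push_cast
      ring
    -- B sum
    have hB : (∑ k ∈ Icc 1 (m + 1),
          (-1 : Polynomial ℝ) ^ (k + 1) * (bernR k * derivative (G (m + 1 - k)))) =
        ∑ i ∈ range m,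
          (-1 : Polynomial ℝ) ^ (i + 1 + 1) *
            (bernR (i + 1) * (C (p - ((m : ℝ) - i) + 1) * G (m - (i + 1)))) := by
      rw [icc_sum_eq_range, Finset.sum_range_succ]
      have hlast : m + 1 - (m + 1) = 0 := by omega
      rw [hlast, hG0]
      simp only [derivative_one, mul_zero, add_zero]
      refine sum_congr rfl fun i hi => ?_
      have him : i < m := mem_range.mp hi
      have h2 : m + 1 - (i + 1) = m - i := by omega
      rw [h2]
      have h3 : derivative (G (m - i)) = C (p - ((m - i : ℕ) : ℝ) + 1) * G (m - i - 1) := by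
        exact ih (m - i) (by omega) (by omega)
      rw [h3]
      have h4 : ((m - i : ℕ) : ℝ) = (m : ℝ) - i := by
        push_cast [Nat.cast_sub him.le]
        ring
      have h5 : m - i - 1 = m - (i + 1) := by omega
      rw [h4, h5]
    rw [hA, hB, mul_add, mul_add]
    rw [add_assoc]
    -- combine the two range sums
    have hcomb : C p * (∑ i ∈ range m,
          (-1 : Polynomial ℝ) ^ (i + 1) * (C ((i : ℝ) + 2) * bernR (i + 1) * G (m - (i + 1)))) +
        C p * (∑ i ∈ range m,
          (-1 : Polynomial ℝ) ^ (i + 1 + 1) *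
            (bernR (i + 1) * (C (p - ((m : ℝ) - i) + 1) * G (m - (i + 1))))) =
        C (p - ((m : ℝ) + 1)) * (C p * ∑ k ∈ Icc 1 m,
          (-1 : Polynomial ℝ) ^ (k + 1) * bernR k * G (m - k)) := by
      rw [icc_sum_eq_range]
      simp only [mul_sum]
      rw [← Finset.sum_add_distrib]
      refine sum_congr rfl fun i _ => ?_
      have hpow : (-1 : Polynomial ℝ) ^ (i + 1 + 1) = (-1) ^ i := by
        rw [pow_succ, pow_succ]; ring
      have hpow2 : (-1 : Polynomial ℝ) ^ (i + 1) = -(-1) ^ i := by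
        rw [pow_succ]; ring
      rw [hpow, hpow2]
      simp only [map_add, map_sub, map_one, map_ofNat]
      ring
    -- use the recurrence at m (if m ≥ 1) to finish
    rw [hcomb, Nat.add_sub_cancel]
    rcases Nat.eq_zero_or_pos m with hm0 | hm1
    · subst hm0
      rw [show Icc 1 0 = (∅ : Finset ℕ) from rfl]
      simp only [sum_empty, mul_zero, hG0, mul_one, add_zero]
      rw [← C_mul]
      congr 1
      push_cast
      ring
    · have hrecm := hG m hm1
      rw [← hrecm]
      simp only [← mul_assoc, ← C_mul]
      rw [← add_mul, ← C_add]
      congr 1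
      push_cast
      ring

/-- if `p` is a positive integer, then for `n ≥ p + 1` the
polynomial `Gₙ(p) ∈ ℝ[t]` has degree at most `n - p - 1`; in particular
`G_{p+1}(p)` is a constant polynomial. -/
theorem G_degree_of_pos_int_ge
    (p : ℕ) (hp : 0 < p)
    (G : ℕ → Polynomial ℝ) (hG0 : G 0 = 1)
    (hG : ∀ n : ℕ, 1 ≤ n →
      G n = Polynomial.C ((p : ℝ) / (n : ℝ)) *
        ∑ k ∈ Finset.Icc 1 n, (-1 : Polynomial ℝ) ^ (k + 1) * bernR k * G (n - k)) :
    (∀ n : ℕ, p + 1 ≤ n → (G n).degree ≤ (n - p - 1 : ℕ)) ∧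
      (G (p + 1)).degree ≤ 0 := by
  -- multiplied form of the recurrence
  have hG' : ∀ n : ℕ, 1 ≤ n → C (n : ℝ) * G n =
      C (p : ℝ) * ∑ k ∈ Icc 1 n, (-1 : Polynomial ℝ) ^ (k + 1) * bernR k * G (n - k) := by
    intro n hn
    rw [hG n hn, ← mul_assoc, ← C_mul]
    congr 2
    field_simp
  have key := G_derivative (p : ℝ) G hG0 hG'
  -- natDegree bound by induction
  have main : ∀ n : ℕ, p + 1 ≤ n → (G n).natDegree ≤ n - p - 1 := by
    intro n hn
    induction n, hn using Nat.le_induction with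
    | base =>
      have h := key (p + 1) (by omega)
      have hz : ((p : ℝ) - ((p + 1 : ℕ) : ℝ) + 1) = 0 := by push_cast; ring
      rw [hz, C_0, zero_mul] at h
      have := Polynomial.natDegree_eq_zero_of_derivative_eq_zero h
      omega
    | succ n hn ihd =>
      have h := key (n + 1) (by omega)
      have hle : (derivative (G (n + 1))).natDegree ≤ n - p - 1 := by
        rw [h]
        exact le_trans (natDegree_C_mul_le _ _) ihd
      by_cases h0 : (G (n + 1)).natDegree = 0
      · omega
      · have hpos : 0 < (G (n + 1)).natDegree := Nat.pos_of_ne_zero h0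
        have hdeg := Polynomial.degree_derivative_eq (G (n + 1)) hpos
        have := Polynomial.natDegree_eq_of_degree_eq_some hdeg
        omega
  constructor
  · intro n hn
    have h := main n hn
    calc (G n).degree ≤ ((G n).natDegree : WithBot ℕ) := degree_le_natDegree
      _ ≤ ((n - p - 1 : ℕ) : WithBot ℕ) := by exact_mod_cast h
  · have h := main (p + 1) (by omega)
    have h2 : p + 1 - p - 1 = 0 := by omega
    rw [h2] at h
    calc (G (p + 1)).degree ≤ (((G (p + 1)).natDegree : ℕ) : WithBot ℕ) := degree_le_natDegree
      _ ≤ ((0 : ℕ) : WithBot ℕ) := by exact_mod_cast h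
      _ = 0 := by norm_num
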